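/- For every r > 0 one has ∫_Λ ∫_{E^∞} log μ_λ(B_{π_λ}(ω, r)) dμ_λ(ω) dm(λ) > −∞; more precisely, if X is covered by l balls of radius r/2, then ∫_{E^∞} −log μ_λ(B_{π_λ}(ω, r)) dμ_λ(ω) ≤ l·Σ_{n=0}^∞ (n+1)e^{-n} < ∞ for every λ ∈ Λ. -/

import Mathlib

open MeasureTheory Filter Set Metric Function Topology
open scoped ENNReal NNReal

noncomputable section

namespace RIFS

/-- Euclidean space `ℝ^q`. -/
abbrev Pt (q : ℕ) := EuclideanSpace ℝ (Fin q)

/-- The one-sided shift on `E^∞`. -/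
def shift {E : Type*} (ω : ℕ → E) : ℕ → E := fun n => ω (n + 1)

/-- The cylinder `[e] = {ω : ω₁ = e}`. -/
def cyl {E : Type*} (e : E) : Set (ℕ → E) := {ω | ω 0 = e}

/-- `B_H(ω, r) = H⁻¹(B(H(ω), r))`. -/
def BH {E β : Type*} [PseudoMetricSpace β] (H : (ℕ → E) → β) (ω : ℕ → E) (r : ℝ) :
    Set (ℕ → E) := H ⁻¹' Metric.ball (H ω) r

/-- The randomized composition `φ_{ω|_n}^λ = φ_{ω₁}^λ ∘ φ_{ω₂}^{θλ} ∘ ⋯ ∘ φ_{ω_n}^{θ^{n-1}λ}`. -/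
def word {Λ E β : Type*} (θ : Λ → Λ) (φ : E → Λ → β → β) :
    Λ → (ℕ → E) → ℕ → β → β
  | _, _, 0 => id
  | l, ω, n + 1 => φ (ω 0) l ∘ word θ φ (θ l) (shift ω) n

/-- The coding map `π_λ(ω) = ⋂_n φ_{ω|_n}^λ(X)`, realized as the limit of
`φ_{ω|_n}^λ(x₀)` for a base point `x₀ ∈ X`. -/
def proj {Λ E β : Type*} [TopologicalSpace β] [Nonempty β]
    (θ : Λ → Λ) (φ : E → Λ → β → β) (x₀ : β) (l : Λ) (ω : ℕ → E) : β :=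
  limUnder atTop fun n => word θ φ l ω n x₀

section Entropy

variable {Λ E β : Type*} [MeasurableSpace Λ] [MeasurableSpace E] [MeasurableSpace β]

/-- The σ-algebra generated by the partition `π_Λ^{-1}(ε_Λ)`. -/
def algL : MeasurableSpace (Λ × (ℕ → E)) := MeasurableSpace.comap Prod.fst inferInstance

/-- The σ-algebra generated by `π_Λ^{-1}(ε_Λ) ∨ π_{ℝ^q}^{-1}(ε_{ℝ^q})`. -/
def algLpi (π : Λ → (ℕ → E) → β) : MeasurableSpace (Λ × (ℕ → E)) :=
  MeasurableSpace.comap (fun p => (p.1, π p.1 p.2)) inferInstance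

/-- The σ-algebra generated by `π_Λ^{-1}(ε_Λ) ∨ (θ×σ)^{-1}(π_{ℝ^q}^{-1}(ε_{ℝ^q}))`. -/
def algLpiT (θ : Λ → Λ) (π : Λ → (ℕ → E) → β) : MeasurableSpace (Λ × (ℕ → E)) :=
  MeasurableSpace.comap (fun p => (p.1, π (θ p.1) (shift p.2))) inferInstance

/-- The information function of the cylinder partition `π_{E^∞}^{-1}(ξ)` with
respect to a sub-σ-algebra `𝔪`. -/
def condInfoCyl (μ : Measure (Λ × (ℕ → E))) (𝔪 : MeasurableSpace (Λ × (ℕ → E))) :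
    Λ × (ℕ → E) → ℝ := fun p =>
  - Real.log ((μ[Set.indicator (Prod.snd ⁻¹' cyl (p.2 0)) (fun _ => (1 : ℝ)) | 𝔪]) p)

/-- Conditional entropy `H_μ(π_{E^∞}^{-1}(ξ) | 𝔪)`. -/
def condEntCyl (μ : Measure (Λ × (ℕ → E))) (𝔪 : MeasurableSpace (Λ × (ℕ → E))) : ℝ :=
  ∫ p, condInfoCyl μ 𝔪 p ∂μ

/-- The random projectional entropy `h_μ(S)`. -/
def projEnt (θ : Λ → Λ) (π : Λ → (ℕ → E) → β) (μ : Measure (Λ × (ℕ → E))) : ℝ :=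
  condEntCyl μ (algLpiT θ π) - condEntCyl μ (algLpi π)

/-- The Lyapunov exponent `χ_μ = -∫ log |(φ_{ω₁}^λ)'(π_{θλ}(σω))| dμ`. -/
def lyap (θ : Λ → Λ) (π : Λ → (ℕ → E) → β) (D : E → Λ → β → ℝ)
    (μ : Measure (Λ × (ℕ → E))) : ℝ :=
  - ∫ p, Real.log (D (p.2 0) p.1 (π (θ p.1) (shift p.2))) ∂μ

/-- `(μ_λ)_λ` is the Rokhlin disintegration of `μ` over the marginal `m`. -/
structure IsDisint (m : Measure Λ) (μ : Measure (Λ × (ℕ → E)))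
    (μd : Λ → Measure (ℕ → E)) : Prop where
  prob : ∀ l, IsProbabilityMeasure (μd l)
  meas : ∀ A : Set (ℕ → E), MeasurableSet A → Measurable fun l => μd l A
  eq : ∀ A : Set (Λ × (ℕ → E)), MeasurableSet A →
    μ A = ∫⁻ l, μd l {ω | (l, ω) ∈ A} ∂m

end Entropy

section KS

variable {α : Type*} [MeasurableSpace α]

/-- A countable measurable partition (indexed by `ℕ`, atoms may be empty). -/
structure IsPartition (P : ℕ → Set α) : Prop where
  meas : ∀ n, MeasurableSet (P n)
  disj : Pairwise (Function.onFun Disjoint P)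
  cover : (⋃ n, P n) = Set.univ

/-- Static entropy of a countable partition. -/
def partEnt (μ : Measure α) (P : ℕ → Set α) : ℝ≥0∞ :=
  ∑' n, ENNReal.ofReal (Real.negMulLog (μ (P n)).toReal)

/-- The atom `⋂_{i<n} T^{-i} P_{k i}` of the dynamical refinement `⋁_{i<n} T^{-i}P`. -/
def refinePart (T : α → α) (P : ℕ → Set α) (n : ℕ) (k : Fin n → ℕ) : Set α :=
  ⋂ i : Fin n, (T^[(i : ℕ)]) ⁻¹' P (k i)

/-- Dynamical entropy `h(μ, T, P) = lim (1/n) H(⋁_{i<n} T^{-i}P)`. -/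
def dynEnt (μ : Measure α) (T : α → α) (P : ℕ → Set α) : ℝ≥0∞ :=
  ⨅ n : ℕ, (∑' k : Fin (n + 1) → ℕ,
    ENNReal.ofReal (Real.negMulLog (μ (refinePart T P (n + 1) k)).toReal)) / (n + 1 : ℝ≥0∞)

/-- Kolmogorov–Sinai entropy `h(μ) = sup_P h(μ, T, P)` over countable measurable
partitions of finite static entropy. -/
def ksEnt (μ : Measure α) (T : α → α) : ℝ≥0∞ :=
  ⨆ (P : ℕ → Set α) (_ : IsPartition P) (_ : partEnt μ P ≠ ⊤), dynEnt μ T P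

end KS

end RIFS

/-- A random countable conformal iterated function system on a compact set
`X ⊆ W ⊆ ℝ^q`, with countable alphabet `E` and parameter space `(Λ, m, θ)`. -/
structure RandomCIFS (q : ℕ) (E : Type*) (Λ : Type*) [MeasurableSpace Λ] where
  m : Measure Λ
  m_prob : IsProbabilityMeasure m
  θ : Λ → Λ
  θ_meas : Measurable θ
  θ_bij : Function.Bijective θ
  θ_mp : MeasurePreserving θ m m
  θ_erg : Ergodic θ m
  X : Set (RIFS.Pt q)
  W : Set (RIFS.Pt q)
  X_cpt : IsCompact X
  X_conn : IsConnected X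
  X_reg : X = closure (interior X)
  W_open : IsOpen W
  W_bdd : Bornology.IsBounded W
  W_conn : IsConnected W
  X_sub_W : X ⊆ W
  s : ℝ
  s_mem : s ∈ Set.Ioo (0 : ℝ) 1
  φ : E → Λ → RIFS.Pt q → RIFS.Pt q
  φ_meas : ∀ e, Measurable fun p : Λ × RIFS.Pt q => φ e p.1 p.2
  φ_inj : ∀ e l, Set.InjOn (φ e l) W
  φ_mapsX : ∀ e l, Set.MapsTo (φ e l) X X
  φ_mapsW : ∀ e l, Set.MapsTo (φ e l) W W
  φ_lip : ∀ e l, LipschitzOnWith s.toNNReal (φ e l) X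
  /-- the conformal derivative modulus `|(φ_e^λ)'(x)|` -/
  D : E → Λ → RIFS.Pt q → ℝ
  φ_conf : ∀ e l x, x ∈ W → ∃ A : RIFS.Pt q →ₗᵢ[ℝ] RIFS.Pt q,
    HasFDerivAt (φ e l) (D e l x • A.toContinuousLinearMap) x
  /-- Bounded Distortion Property -/
  bdp : ∃ K : ℝ → ℝ, K 0 = 1 ∧ Tendsto K (nhdsWithin 0 (Set.Ioi 0)) (nhds 1) ∧
    (∀ t ∈ Set.Ico (0 : ℝ) 1, 1 ≤ K t) ∧
    ∀ t ∈ Set.Ico (0 : ℝ) 1, ∀ e l x y, x ∈ X →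
      ‖y - x‖ ≤ t * Metric.infDist x Wᶜ → D e l y ≤ K t * D e l x

namespace RandomCIFS

variable {q : ℕ} {E Λ : Type*} [MeasurableSpace Λ]

/-- A base point of `X`. -/
def x0 (S : RandomCIFS q E Λ) : RIFS.Pt q := S.X_conn.nonempty.some

/-- The coding maps `π_λ : E^∞ → ℝ^q`. -/
def projMap (S : RandomCIFS q E Λ) : Λ → (ℕ → E) → RIFS.Pt q :=
  RIFS.proj S.θ S.φ S.x0

/-- The limit set `J_λ = π_λ(E^∞)`. -/
def J (S : RandomCIFS q E Λ) (l : Λ) : Set (RIFS.Pt q) := Set.range (S.projMap l)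

/-- The skew product `θ × σ`. -/
def Tmap (S : RandomCIFS q E Λ) : Λ × (ℕ → E) → Λ × (ℕ → E) :=
  fun p => (S.θ p.1, RIFS.shift p.2)

/-- `|(φ_{ω|_n}^λ)'(π_{θ^n λ}(σ^n ω))|`, computed via the chain rule. -/
def Dword (S : RandomCIFS q E Λ) (l : Λ) (ω : ℕ → E) (n : ℕ) : ℝ :=
  ∏ j ∈ Finset.range n,
    S.D (ω j) (S.θ^[j] l) (S.projMap (S.θ^[j + 1] l) (RIFS.shift^[j + 1] ω))

end RandomCIFS

open RIFS

section AuxLemmas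

variable {q : ℕ} {E Λ : Type*} [MeasurableSpace Λ]

lemma RandomCIFS.word_mem_X (S : RandomCIFS q E Λ) :
    ∀ (n : ℕ) (l : Λ) (ω : ℕ → E), word S.θ S.φ l ω n S.x0 ∈ S.X := by
  intro n
  induction n with
  | zero => intro l ω; exact S.X_conn.nonempty.some_mem
  | succ n ih => intro l ω; exact S.φ_mapsX _ _ (ih (S.θ l) (shift ω))

lemma RandomCIFS.word_dist (S : RandomCIFS q E Λ) :
    ∀ (n : ℕ) (l : Λ) (ω : ℕ → E),
      dist (word S.θ S.φ l ω n S.x0) (word S.θ S.φ l ω (n + 1) S.x0) ≤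
        Metric.diam S.X * S.s ^ n := by
  intro n
  induction n with
  | zero =>
    intro l ω
    simpa using Metric.dist_le_diam_of_mem S.X_cpt.isBounded
      (S.word_mem_X 0 l ω) (S.word_mem_X 1 l ω)
  | succ n ih =>
    intro l ω
    have h1 := (S.φ_lip (ω 0) l).dist_le_mul _
      (S.word_mem_X n (S.θ l) (shift ω)) _ (S.word_mem_X (n + 1) (S.θ l) (shift ω))
    have hs0 := S.s_mem.1.le
    calc dist (word S.θ S.φ l ω (n + 1) S.x0) (word S.θ S.φ l ω (n + 2) S.x0)
        ≤ S.s * dist (word S.θ S.φ (S.θ l) (shift ω) n S.x0)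
            (word S.θ S.φ (S.θ l) (shift ω) (n + 1) S.x0) := by
          simpa [Real.coe_toNNReal _ hs0, word] using h1
      _ ≤ S.s * (Metric.diam S.X * S.s ^ n) :=
          mul_le_mul_of_nonneg_left (ih _ _) hs0
      _ = Metric.diam S.X * S.s ^ (n + 1) := by ring

lemma RandomCIFS.tendsto_word (S : RandomCIFS q E Λ) (l : Λ) (ω : ℕ → E) :
    Tendsto (fun n => word S.θ S.φ l ω n S.x0) atTop (𝓝 (S.projMap l ω)) := by
  have hc : CauchySeq (fun n => word S.θ S.φ l ω n S.x0) :=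
    cauchySeq_of_le_geometric S.s (Metric.diam S.X) S.s_mem.2
      (fun n => S.word_dist n l ω)
  obtain ⟨x, hx⟩ := cauchySeq_tendsto_of_complete hc
  have hlim : S.projMap l ω = x := hx.limUnder_eq
  rw [hlim]
  exact hx

lemma RandomCIFS.proj_mem_X (S : RandomCIFS q E Λ) (l : Λ) (ω : ℕ → E) :
    S.projMap l ω ∈ S.X :=
  S.X_cpt.isClosed.mem_of_tendsto (S.tendsto_word l ω)
    (Eventually.of_forall fun n => S.word_mem_X n l ω)

variable [Countable E] [MeasurableSpace E] [MeasurableSingletonClass E]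

lemma RandomCIFS.measurable_word (S : RandomCIFS q E Λ) :
    ∀ (n : ℕ) (l : Λ), Measurable fun ω : ℕ → E => word S.θ S.φ l ω n S.x0 := by
  intro n
  induction n with
  | zero => intro l; exact measurable_const
  | succ n ih =>
    intro l
    have hg : Measurable fun ω : ℕ → E => word S.θ S.φ (S.θ l) (shift ω) n S.x0 :=
      (ih (S.θ l)).comp (measurable_pi_lambda _ fun i => measurable_pi_apply (i + 1))
    have hφ : Measurable fun p : Pt q × E => S.φ p.2 l p.1 :=
      measurable_from_prod_countable_left fun e =>
        (S.φ_meas e).comp (measurable_const.prodMk measurable_id)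
    exact hφ.comp (hg.prodMk (measurable_pi_apply 0))

lemma RandomCIFS.measurable_projMap (S : RandomCIFS q E Λ) (l : Λ) :
    Measurable (S.projMap l) :=
  measurable_of_tendsto_metrizable (fun n => S.measurable_word n l)
    (tendsto_pi_nhds.2 fun ω => S.tendsto_word l ω)

lemma one_le_tsum_aux : (1 : ℝ) ≤ ∑' k : ℕ, (k + 1 : ℝ) * Real.exp (-(k : ℝ)) := by
  have hsum : Summable (fun k : ℕ => (k + 1 : ℝ) * Real.exp (-(k : ℝ))) := by
    have h1 : Summable (fun k : ℕ => (k : ℝ) ^ 1 * Real.exp (-1 * (k : ℝ))) :=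
      Real.summable_pow_mul_exp_neg_nat_mul 1 one_pos
    have h2 : Summable (fun k : ℕ => Real.exp (-(k : ℝ))) := Real.summable_exp_neg_nat
    have := h1.add h2
    refine this.congr fun k => ?_
    rw [pow_one]
    ring_nf
  have h0 : ((0 : ℕ) + 1 : ℝ) * Real.exp (-((0 : ℕ) : ℝ)) = 1 := by norm_num
  calc (1 : ℝ) = ((0 : ℕ) + 1 : ℝ) * Real.exp (-((0 : ℕ) : ℝ)) := h0.symm
    _ ≤ _ := hsum.le_tsum 0 fun j _ => by positivity

end AuxLemmas

/-- **Lemma (integrability of `log μ_λ(B_{π_λ}(ω,r))`).**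
For every `r > 0`, `∫_Λ ∫_{E^∞} log μ_λ(B_{π_λ}(ω,r)) dμ_λ dm > −∞`; more precisely,
if `X` is covered by `n` balls of radius `r/2`, then for every `λ`,
`∫ −log μ_λ(B_{π_λ}(ω,r)) dμ_λ ≤ n·Σ_{k≥0}(k+1)e^{−k} < ∞`. -/
theorem log_measure_ball_integrable
    {q : ℕ} {E Λ : Type*} [MeasurableSpace Λ]
    [Countable E] [MeasurableSpace E] [MeasurableSingletonClass E]
    (S : RandomCIFS q E Λ)
    (μ : Measure (Λ × (ℕ → E))) [IsProbabilityMeasure μ]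
    (hinv : MeasurePreserving S.Tmap μ μ)
    (hmarg : μ.map Prod.fst = S.m)
    (μd : Λ → Measure (ℕ → E)) (hdis : IsDisint S.m μ μd) :
    (∀ r : ℝ, 0 < r →
      ∫⁻ l, ∫⁻ ω, ENNReal.ofReal
          (- Real.log ((μd l (BH (S.projMap l) ω r)).toReal)) ∂(μd l) ∂S.m < ⊤) ∧
    ∀ r : ℝ, 0 < r → ∀ (n : ℕ) (z : Fin n → RIFS.Pt q),
      S.X ⊆ ⋃ i : Fin n, Metric.ball (z i) (r / 2) → ∀ l : Λ,
        ∫⁻ ω, ENNReal.ofReal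
            (- Real.log ((μd l (BH (S.projMap l) ω r)).toReal)) ∂(μd l) ≤
          ENNReal.ofReal (n * ∑' k : ℕ, (k + 1 : ℝ) * Real.exp (-(k : ℝ))) := by
  classical
  have key : ∀ r : ℝ, 0 < r → ∀ (n : ℕ) (z : Fin n → RIFS.Pt q),
      S.X ⊆ ⋃ i : Fin n, Metric.ball (z i) (r / 2) → ∀ l : Λ,
        ∫⁻ ω, ENNReal.ofReal
            (- Real.log ((μd l (BH (S.projMap l) ω r)).toReal)) ∂(μd l) ≤
          ENNReal.ofReal (n * ∑' k : ℕ, (k + 1 : ℝ) * Real.exp (-(k : ℝ))) := by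
    intro r hr n z hcov l
    haveI := hdis.prob l
    set ν := μd l with hν
    set A : Fin n → Set (ℕ → E) := fun i => S.projMap l ⁻¹' Metric.ball (z i) (r / 2)
      with hA
    have hAmeas : ∀ i, MeasurableSet (A i) :=
      fun i => (S.measurable_projMap l) measurableSet_ball
    have hex : ∀ ω, ∃ i, ω ∈ A i := by
      intro ω
      have := hcov (S.proj_mem_X l ω)
      simpa [hA] using this
    have hsub : ∀ i ω, ω ∈ A i → A i ⊆ BH (S.projMap l) ω r := by
      intro i ω hω ω' hω'
      have h1 : dist (S.projMap l ω') (z i) < r / 2 := by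
        simpa [hA, Metric.mem_ball] using hω'
      have h2 : dist (S.projMap l ω) (z i) < r / 2 := by
        simpa [hA, Metric.mem_ball] using hω
      have hd : dist (S.projMap l ω') (S.projMap l ω) < r := by
        calc dist (S.projMap l ω') (S.projMap l ω)
            ≤ dist (S.projMap l ω') (z i) + dist (S.projMap l ω) (z i) :=
              dist_triangle_right _ _ _
          _ < r / 2 + r / 2 := add_lt_add h1 h2
          _ = r := by ring
      simpa [BH, Metric.mem_ball] using hd
    set c : Fin n → ℝ≥0∞ := fun i =>
      if ν (A i) = 0 then 0 else ENNReal.ofReal (- Real.log (ν (A i)).toReal) with hc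
    set N : Set (ℕ → E) := ⋃ i : Fin n, if ν (A i) = 0 then A i else ∅ with hN
    have hNnull : ν N = 0 := by
      refine le_antisymm (le_trans (measure_iUnion_le _) ?_) zero_le
      have hz : ∀ i : Fin n, ν (if ν (A i) = 0 then A i else ∅) = 0 := by
        intro i; split_ifs with h
        · exact h
        · simp
      simp [ENNReal.tsum_eq_zero, hz]
    have hae : ∀ᵐ ω ∂ν,
        ENNReal.ofReal (- Real.log ((ν (BH (S.projMap l) ω r)).toReal)) ≤
          ∑ i : Fin n, (A i).indicator (fun _ => c i) ω := by
      have hcompl : ∀ᵐ ω ∂ν, ω ∉ N := by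
        rw [ae_iff]
        simpa using hNnull
      filter_upwards [hcompl] with ω hωN
      obtain ⟨i, hi⟩ := hex ω
      have hνi : ν (A i) ≠ 0 := by
        intro h
        exact hωN (mem_iUnion.2 ⟨i, by simp [h, hi]⟩)
      have hBincl : ν (A i) ≤ ν (BH (S.projMap l) ω r) := measure_mono (hsub i ω hi)
      have hf : ENNReal.ofReal (- Real.log ((ν (BH (S.projMap l) ω r)).toReal)) ≤ c i := by
        rw [hc]
        simp only [if_neg hνi]
        apply ENNReal.ofReal_le_ofReal
        have h1 : (ν (A i)).toReal ≤ (ν (BH (S.projMap l) ω r)).toReal :=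
          ENNReal.toReal_mono (measure_ne_top ν _) hBincl
        have h2 : 0 < (ν (A i)).toReal := ENNReal.toReal_pos hνi (measure_ne_top ν _)
        have := Real.log_le_log h2 h1
        linarith
      refine le_trans hf ?_
      have heq : c i = (A i).indicator (fun _ => c i) ω := by
        simp [Set.indicator_of_mem hi]
      rw [heq]
      exact Finset.single_le_sum (f := fun j => (A j).indicator (fun _ => c j) ω)
        (fun j _ => zero_le) (Finset.mem_univ i)
    have hterm : ∀ i, c i * ν (A i) ≤ ENNReal.ofReal 1 := by
      intro i
      by_cases h0 : ν (A i) = 0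
      · simp [hc, h0]
      · have hfin : ν (A i) ≠ ⊤ := measure_ne_top ν _
        set t := (ν (A i)).toReal with htdef
        have ht0 : 0 < t := ENNReal.toReal_pos h0 hfin
        have ht1 : t ≤ 1 := by
          have hle1 : ν (A i) ≤ 1 := prob_le_one
          calc t ≤ ((1 : ℝ≥0∞)).toReal := ENNReal.toReal_mono (by simp) hle1
            _ = 1 := by simp
        have hlog : - Real.log t ≤ 1 / t - 1 := by
          have h := Real.log_le_sub_one_of_pos (show (0 : ℝ) < 1 / t by positivity)
          rw [Real.log_div one_ne_zero (ne_of_gt ht0), Real.log_one] at h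
          linarith
        have hnn : 0 ≤ - Real.log t := neg_nonneg.2 (Real.log_nonpos ht0.le ht1)
        have hrw : c i * ν (A i) = ENNReal.ofReal ((- Real.log t) * t) := by
          rw [hc]
          simp only [if_neg h0]
          rw [ENNReal.ofReal_mul hnn, ← htdef, ENNReal.ofReal_toReal hfin]
        rw [hrw]
        apply ENNReal.ofReal_le_ofReal
        calc (- Real.log t) * t ≤ (1 / t - 1) * t :=
              mul_le_mul_of_nonneg_right hlog ht0.le
          _ = 1 - t := by field_simp
          _ ≤ 1 := by linarith
    calc ∫⁻ ω, ENNReal.ofReal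
            (- Real.log ((ν (BH (S.projMap l) ω r)).toReal)) ∂ν
        ≤ ∫⁻ ω, ∑ i : Fin n, (A i).indicator (fun _ => c i) ω ∂ν :=
          lintegral_mono_ae hae
      _ = ∑ i : Fin n, c i * ν (A i) := by
          rw [lintegral_finset_sum _ fun i _ => measurable_const.indicator (hAmeas i)]
          refine Finset.sum_congr rfl fun i _ => ?_
          rw [lintegral_indicator (hAmeas i)]
          simp
      _ ≤ ∑ _i : Fin n, ENNReal.ofReal 1 := Finset.sum_le_sum fun i _ => hterm i
      _ = (n : ℝ≥0∞) * ENNReal.ofReal 1 := by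
          simp [Finset.sum_const, Finset.card_univ, mul_comm]
      _ ≤ ENNReal.ofReal (n * ∑' k : ℕ, (k + 1 : ℝ) * Real.exp (-(k : ℝ))) := by
          calc (n : ℝ≥0∞) * ENNReal.ofReal 1
              = ENNReal.ofReal (n : ℝ) * ENNReal.ofReal 1 := by
                rw [ENNReal.ofReal_natCast]
            _ ≤ ENNReal.ofReal (n : ℝ) *
                ENNReal.ofReal (∑' k : ℕ, (k + 1 : ℝ) * Real.exp (-(k : ℝ))) :=
                mul_le_mul_right (ENNReal.ofReal_le_ofReal one_le_tsum_aux) _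
            _ = ENNReal.ofReal (n * ∑' k : ℕ, (k + 1 : ℝ) * Real.exp (-(k : ℝ))) :=
                (ENNReal.ofReal_mul (Nat.cast_nonneg n)).symm
  refine ⟨?_, key⟩
  intro r hr
  obtain ⟨t, htfin, htcov⟩ :=
    (Metric.totallyBounded_iff.1 S.X_cpt.totallyBounded) (r / 2) (by linarith)
  set F := htfin.toFinset with hF
  set g : Fin F.card → RIFS.Pt q := fun i => (F.equivFin.symm i : RIFS.Pt q) with hg
  have hcov : S.X ⊆ ⋃ i : Fin F.card, Metric.ball (g i) (r / 2) := by
    intro x hx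
    have := htcov hx
    simp only [mem_iUnion] at this ⊢
    obtain ⟨y, hyt, hxy⟩ := this
    refine ⟨F.equivFin ⟨y, htfin.mem_toFinset.2 hyt⟩, ?_⟩
    simpa [hg, Equiv.symm_apply_apply] using hxy
  haveI := S.m_prob
  calc ∫⁻ l, ∫⁻ ω, ENNReal.ofReal
          (- Real.log ((μd l (BH (S.projMap l) ω r)).toReal)) ∂(μd l) ∂S.m
      ≤ ∫⁻ _l, ENNReal.ofReal
          (F.card * ∑' k : ℕ, (k + 1 : ℝ) * Real.exp (-(k : ℝ))) ∂S.m :=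
        lintegral_mono fun l => key r hr F.card g hcov l
    _ = ENNReal.ofReal (F.card * ∑' k : ℕ, (k + 1 : ℝ) * Real.exp (-(k : ℝ))) := by
        rw [lintegral_const, measure_univ, mul_one]
    _ < ⊤ := ENNReal.ofReal_lt_top
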